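/- Iterated DIT FFT factorization: for α = (n_K,…,n_0) and N = ∏_{k=0}^K n_k, the DFT matrix factors as F_N = (∏_{k=0}^K D_{k,α}) S_α, where D_{k,α} = A_k^{-1} (I_{N/n_k} ⊗ F_{n_k}) Ŵ_k A_k, with A_k = I_{N/N_k} ⊗ L^{N_k}_{n_k}, Ŵ_k = I_{N/N_k} ⊗ W^{N_k}_{n_k}, N_k = ∏_{j=0}^k n_j, and the product over k taken with D_{K,α} leftmost. -/

import Mathlib

open Matrix Complex

/-- The primitive `n`-th root of unity `ω_n = exp(-2πi/n)`. -/
noncomputable def tw (n : ℕ) : ℂ := Complex.exp (-(2 * Real.pi * Complex.I) / n)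

/-- The `n × n` DFT matrix `F_n = [ω_n^{kl}]`. -/
noncomputable def DFT (n : ℕ) : Matrix (Fin n) (Fin n) ℂ :=
  fun r c => tw n ^ (r.val * c.val)

/-- The stride permutation `L^n_k` (with `n = k*m`), sending the basis vector
`e_{i,k} ⊗ e_{j,m}` (flat index `i*m+j`) to `e_{j,m} ⊗ e_{i,k}` (flat index `j*k+i`). -/
noncomputable def Lmat (n k m : ℕ) : Matrix (Fin n) (Fin n) ℂ :=
  fun r c => if r.val = (c.val % m) * k + c.val / m then 1 else 0

/-- The diagonal twiddle matrix `W^n_m` (with `n = k*m`), acting on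
`e_{i,k} ⊗ e_{j,m}` (flat index `c = i*m+j`) by the scalar `ω_n^{ij}`. -/
noncomputable def Wmat (n m : ℕ) : Matrix (Fin n) (Fin n) ℂ :=
  fun r c => if r = c then tw n ^ ((c.val / m) * (c.val % m)) else 0

/-- Entry of a `k × k` matrix at natural-number indices (0 outside range). -/
noncomputable def ment {k : ℕ} (A : Matrix (Fin k) (Fin k) ℂ) (i j : ℕ) : ℂ :=
  if h : i < k ∧ j < k then A ⟨i, h.1⟩ ⟨j, h.2⟩ else 0

/-- Kronecker product `A ⊗ B` of a `k×k` and an `m×m` matrix, written on flat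
indices of size `n = k*m` (row-major: index `i*m+j ↔ e_{i,k} ⊗ e_{j,m}`). -/
noncomputable def kron (n k m : ℕ) (A : Matrix (Fin k) (Fin k) ℂ)
    (B : Matrix (Fin m) (Fin m) ℂ) : Matrix (Fin n) (Fin n) ℂ :=
  fun r c => ment A (r.val / m) (c.val / m) * ment B (r.val % m) (c.val % m)

/-- Value of a digit list `[d_0, d_1, …]` in the mixed-radix system with radices
`[c_0, c_1, …]` (least-significant first): `d_0 + c_0*(d_1 + c_1*(…))`. -/
def mval : List ℕ → List ℕ → ℕ
  | c :: cs, d :: ds => d + c * mval cs ds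
  | _, _ => 0

/-- Digits (least-significant first) of `x` in the mixed-radix system with
radices `[c_0, c_1, …]` (least-significant first). -/
def mdig : List ℕ → ℕ → List ℕ
  | [], _ => []
  | c :: cs, x => x % c :: mdig cs (x / c)

/-- The digit-reversal permutation `P_α` of a multi-index `α = (n_K, …, n_0)`,
where `a = [n_0, …, n_K]` lists the radices of the system generated by `α`
least-significant first: `x` is decomposed in the system generated by
`α* = (n_0, …, n_K)` and re-read with reversed digits in the system of `α`. -/
def mrev (a : List ℕ) (x : ℕ) : ℕ := mval a ((mdig a.reverse x).reverse)

/-- The digit-reversal permutation matrix `S_α`, `S_α e_x = e_{P_α x}`;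
`a = [n_0, …, n_K]` lists `α = (n_K, …, n_0)` least-significant first. -/
noncomputable def Smat (n : ℕ) (a : List ℕ) : Matrix (Fin n) (Fin n) ℂ :=
  fun r c => if r.val = mrev a c.val then 1 else 0

/-- The diagonal matrix `V_{k,m,n}` of size `N = k*m*n`, acting on
`e_{i,k} ⊗ e_{j,m} ⊗ e_{ℓ,n}` (flat index `i*(m*n) + j*n + ℓ`) by
`ω_{kmn}^{i(ℓ m + j)}`. -/
noncomputable def Vmat (N k m n : ℕ) : Matrix (Fin N) (Fin N) ℂ :=
  fun r c => if r = c then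
    tw (k * m * n) ^ ((c.val / (m * n)) * ((c.val % n) * m + (c.val / n) % m)) else 0

/-! ### Auxiliary lemmas -/

section Aux

lemma tw_pow_self {n : ℕ} (hn : 0 < n) : tw n ^ n = 1 := by
  rw [tw, ← Complex.exp_nat_mul]
  have hn' : (n : ℂ) ≠ 0 := Nat.cast_ne_zero.2 hn.ne'
  rw [mul_div_assoc', mul_comm, mul_div_assoc, div_self hn', mul_one,
    Complex.exp_neg, Complex.exp_two_pi_mul_I, inv_one]

lemma tw_pow_mod {n : ℕ} (hn : 0 < n) (a : ℕ) : tw n ^ a = tw n ^ (a % n) := by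
  conv_lhs => rw [← Nat.div_add_mod a n]
  rw [pow_add, pow_mul, tw_pow_self hn, one_pow, one_mul]

lemma tw_mul_pow {m n : ℕ} (hm : 0 < m) (hn : 0 < n) : tw (m * n) ^ n = tw m := by
  rw [tw, tw, ← Complex.exp_nat_mul]
  congr 1
  have hm' : (m : ℂ) ≠ 0 := Nat.cast_ne_zero.2 hm.ne'
  have hn' : (n : ℂ) ≠ 0 := Nat.cast_ne_zero.2 hn.ne'
  field_simp
  push_cast
  ring

lemma tw_mul_pow' {m n : ℕ} (hm : 0 < m) (hn : 0 < n) (j : ℕ) :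
    tw (m * n) ^ (n * j) = tw m ^ j := by
  rw [mul_comm n j, pow_mul', tw_mul_pow hm hn]

lemma tw_mul_pow'' {m n : ℕ} (hm : 0 < m) (hn : 0 < n) (j : ℕ) :
    tw (m * n) ^ (m * j) = tw n ^ j := by
  rw [mul_comm m n]; exact tw_mul_pow' hn hm j

lemma sum_pick {n : ℕ} (g : Fin n → ℂ) (x0 : Fin n) (h : ∀ x, x ≠ x0 → g x = 0) :
    ∑ x, g x = g x0 :=
  Finset.sum_eq_single x0 (fun x _ hx => h x hx) (fun h => absurd (Finset.mem_univ x0) h)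

lemma idx_lt {a b k m : ℕ} (ha : a < k) (hb : b < m) : a * m + b < k * m :=
  calc a * m + b < a * m + m := by omega
  _ = (a + 1) * m := by ring
  _ ≤ k * m := Nat.mul_le_mul_right m ha

lemma idx_div {a b m : ℕ} (hb : b < m) : (a * m + b) / m = a := by
  rw [mul_comm a m, Nat.mul_add_div (by omega), Nat.div_eq_of_lt hb, Nat.add_zero]

lemma idx_mod {a b m : ℕ} (hb : b < m) : (a * m + b) % m = b := by
  rw [mul_comm a m, Nat.mul_add_mod, Nat.mod_eq_of_lt hb]

lemma ment_eq {k : ℕ} (A : Matrix (Fin k) (Fin k) ℂ) {i j : ℕ} (hi : i < k) (hj : j < k) :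
    ment A i j = A ⟨i, hi⟩ ⟨j, hj⟩ := dif_pos ⟨hi, hj⟩

lemma ment_one {k a b : ℕ} :
    ment (1 : Matrix (Fin k) (Fin k) ℂ) a b = if a = b ∧ a < k then 1 else 0 := by
  unfold ment
  split
  · rename_i h
    rw [Matrix.one_apply]
    by_cases hab : a = b
    · subst hab; simp [h.1]
    · simp [hab, Fin.ext_iff]
  · rename_i h
    rw [if_neg]
    rintro ⟨rfl, hak⟩
    exact h ⟨hak, hak⟩

lemma sum_ment_mul {p : ℕ} (A A' : Matrix (Fin p) (Fin p) ℂ) {u v : ℕ} (hu : u < p)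
    (hv : v < p) : ∑ i : Fin p, ment A u i.val * ment A' i.val v = ment (A * A') u v := by
  rw [ment_eq _ hu hv, Matrix.mul_apply]
  refine Finset.sum_congr rfl fun i _ => ?_
  rw [ment_eq _ hu i.isLt, ment_eq _ i.isLt hv]

end Aux
section Kron

lemma kron_mul_general {p q : ℕ} (hq : 0 < q) (A A' : Matrix (Fin p) (Fin p) ℂ)
    (B B' : Matrix (Fin q) (Fin q) ℂ) :
    kron (p * q) p q A B * kron (p * q) p q A' B' = kron (p * q) p q (A * A') (B * B') := by
  ext r c
  rw [Matrix.mul_apply, ← Equiv.sum_comp finProdFinEquiv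
    (fun x => kron (p * q) p q A B r x * kron (p * q) p q A' B' x c), Fintype.sum_prod_type]
  have hrq : r.val / q < p := by
    rw [Nat.div_lt_iff_lt_mul hq]; exact r.isLt
  have hcq : c.val / q < p := by
    rw [Nat.div_lt_iff_lt_mul hq]; exact c.isLt
  have key : ∀ (i : Fin p) (j : Fin q),
      kron (p * q) p q A B r (finProdFinEquiv (i, j)) *
        kron (p * q) p q A' B' (finProdFinEquiv (i, j)) c =
      (ment A (r.val / q) i.val * ment A' i.val (c.val / q)) *
        (ment B (r.val % q) j.val * ment B' j.val (c.val % q)) := by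
    intro i j
    have hval : (finProdFinEquiv (i, j)).val = (j : ℕ) + q * i.val := rfl
    have hdiv : (finProdFinEquiv (i, j)).val / q = i.val := by
      rw [hval, add_comm, mul_comm q i.val, idx_div j.isLt]
    have hmod : (finProdFinEquiv (i, j)).val % q = j.val := by
      rw [hval, Nat.add_mul_mod_self_left, Nat.mod_eq_of_lt j.isLt]
    show ment A _ _ * ment B _ _ * (ment A' _ _ * ment B' _ _) = _
    rw [hdiv, hmod]; ring
  calc ∑ i : Fin p, ∑ j : Fin q, kron (p * q) p q A B r (finProdFinEquiv (i, j)) *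
        kron (p * q) p q A' B' (finProdFinEquiv (i, j)) c
      = ∑ i : Fin p, ∑ j : Fin q,
        (ment A (r.val / q) i.val * ment A' i.val (c.val / q)) *
          (ment B (r.val % q) j.val * ment B' j.val (c.val % q)) := by
        exact Finset.sum_congr rfl fun i _ => Finset.sum_congr rfl fun j _ => key i j
    _ = (∑ i : Fin p, ment A (r.val / q) i.val * ment A' i.val (c.val / q)) *
        (∑ j : Fin q, ment B (r.val % q) j.val * ment B' j.val (c.val % q)) := by
        rw [Finset.sum_mul_sum]
    _ = ment (A * A') (r.val / q) (c.val / q) * ment (B * B') (r.val % q) (c.val % q) := by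
        rw [sum_ment_mul _ _ hrq hcq, sum_ment_mul _ _ (Nat.mod_lt _ hq) (Nat.mod_lt _ hq)]
    _ = kron (p * q) p q (A * A') (B * B') r c := rfl

lemma kron_one_one {p q : ℕ} (hq : 0 < q) :
    kron (p * q) p q (1 : Matrix (Fin p) (Fin p) ℂ) (1 : Matrix (Fin q) (Fin q) ℂ) = 1 := by
  ext r c
  show ment 1 _ _ * ment 1 _ _ = _
  rw [ment_one, ment_one, Matrix.one_apply]
  have h1 : q * (r.val / q) + r.val % q = r.val := Nat.div_add_mod _ _
  have h2 : q * (c.val / q) + c.val % q = c.val := Nat.div_add_mod _ _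
  have hrq : r.val / q < p := by rw [Nat.div_lt_iff_lt_mul hq]; exact r.isLt
  have hmq : r.val % q < q := Nat.mod_lt _ hq
  by_cases h : r = c
  · subst h; simp [hrq, hmq]
  · have hne : ¬(r.val / q = c.val / q ∧ r.val % q = c.val % q) := by
      rintro ⟨e1, e2⟩
      exact h (Fin.ext (by rw [← h1, ← h2, e1, e2]))
    rw [if_neg h]
    rcases Decidable.not_and_iff_or_not.mp hne with h' | h'
    · exact mul_eq_zero_of_left (if_neg fun hh => h' hh.1) _
    · exact mul_eq_zero_of_right _ (if_neg fun hh => h' hh.1)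

lemma kron_one_left {N : ℕ} (B : Matrix (Fin N) (Fin N) ℂ) : kron N 1 N 1 B = B := by
  ext r c
  show ment 1 (r.val / N) (c.val / N) * ment B (r.val % N) (c.val % N) = B r c
  rw [Nat.div_eq_of_lt r.isLt, Nat.div_eq_of_lt c.isLt, Nat.mod_eq_of_lt r.isLt,
    Nat.mod_eq_of_lt c.isLt, ment_one, ment_eq B r.isLt c.isLt]
  simp

end Kron
lemma kron_id_assoc {s p q : ℕ} (hs : 0 < s) (hp : 0 < p) (hq : 0 < q)
    (B : Matrix (Fin q) (Fin q) ℂ) :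
    kron (s * (p * q)) (s * p) q 1 B =
      kron (s * (p * q)) s (p * q) 1 (kron (p * q) p q 1 B) := by
  ext r c
  have hpq : 0 < p * q := Nat.mul_pos hp hq
  have hr' : r.val % (p * q) < p * q := Nat.mod_lt _ hpq
  have hc' : c.val % (p * q) < p * q := Nat.mod_lt _ hpq
  show ment 1 (r.val / q) (c.val / q) * ment B (r.val % q) (c.val % q)
    = ment 1 (r.val / (p * q)) (c.val / (p * q)) *
      ment (kron (p * q) p q 1 B) (r.val % (p * q)) (c.val % (p * q))
  rw [ment_eq _ hr' hc']
  show ment 1 (r.val / q) (c.val / q) * ment B (r.val % q) (c.val % q)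
    = ment 1 (r.val / (p * q)) (c.val / (p * q)) *
      (ment 1 (r.val % (p * q) / q) (c.val % (p * q) / q) *
        ment B (r.val % (p * q) % q) (c.val % (p * q) % q))
  have hmm : ∀ x : ℕ, x % (p * q) % q = x % q := fun x =>
    Nat.mod_mod_of_dvd x ⟨p, mul_comm p q⟩
  have hmd : ∀ x : ℕ, x % (p * q) / q = x / q % p := fun x => by
    rw [mul_comm p q]; exact Nat.mod_mul_right_div_self x q p
  have hdd : ∀ x : ℕ, x / (p * q) = x / q / p := fun x => by
    rw [Nat.div_div_eq_div_mul, mul_comm q p]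
  rw [hmm, hmm, hmd, hmd, hdd, hdd, ment_one, ment_one, ment_one]
  have hr : r.val / q < s * p := by
    rw [Nat.div_lt_iff_lt_mul hq]; rw [mul_assoc]; exact r.isLt
  have hr1 : r.val / q / p < s := by rw [Nat.div_lt_iff_lt_mul hp]; exact hr
  have hr2 : r.val / q % p < p := Nat.mod_lt _ hp
  have e1 : p * (r.val / q / p) + r.val / q % p = r.val / q := Nat.div_add_mod _ _
  have e2 : p * (c.val / q / p) + c.val / q % p = c.val / q := Nat.div_add_mod _ _
  by_cases h : r.val / q = c.val / q
  · rw [if_pos ⟨h, hr⟩, if_pos ⟨by rw [h], hr1⟩, if_pos ⟨by rw [h], hr2⟩]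
    ring
  · rw [if_neg fun hh => h hh.1]
    rcases Decidable.not_and_iff_or_not.mp
      (show ¬(r.val / q / p = c.val / q / p ∧ r.val / q % p = c.val / q % p) from by
        rintro ⟨f1, f2⟩; exact h (by rw [← e1, ← e2, f1, f2])) with h' | h'
    · rw [if_neg fun hh => h' hh.1]; ring
    · have hz : (if (r.val / q % p = c.val / q % p ∧ r.val / q % p < p) then (1:ℂ) else 0) = 0 :=
        if_neg fun hh => h' hh.1
      rw [hz]; ring
section Perm

lemma Lmat_mul_apply {n k m : ℕ} (hk : 0 < k) (hm : 0 < m) (hn : k * m = n)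
    (M : Matrix (Fin n) (Fin n) ℂ) (r c : Fin n) :
    (Lmat n k m * M) r c =
      M ⟨(r.val % k) * m + r.val / k,
        lt_of_lt_of_eq (idx_lt (Nat.mod_lt _ hk)
          (Nat.div_lt_of_lt_mul (lt_of_lt_of_eq r.isLt hn.symm))) hn⟩ c := by
  subst hn
  rw [Matrix.mul_apply]
  have hrk : r.val / k < m := Nat.div_lt_of_lt_mul r.isLt
  set x0 : Fin (k * m) := ⟨(r.val % k) * m + r.val / k, _⟩ with hx0
  have hxm : x0.val % m = r.val / k := idx_mod hrk
  have hxd : x0.val / m = r.val % k := idx_div hrk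
  rw [sum_pick _ x0 ?side]
  · show (if r.val = (x0.val % m) * k + x0.val / m then (1:ℂ) else 0) * M x0 c = M x0 c
    rw [hxm, hxd, if_pos (Nat.div_add_mod' r.val k).symm, one_mul]
  case side =>
    intro x hx
    show (if r.val = (x.val % m) * k + x.val / m then (1:ℂ) else 0) * M x c = 0
    rw [if_neg, zero_mul]
    intro hr
    apply hx
    have hdm : x.val / m < k := Nat.div_lt_of_lt_mul (lt_of_lt_of_eq x.isLt (mul_comm k m))
    apply Fin.ext
    have h1 : r.val % k = x.val / m := by rw [hr, idx_mod hdm]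
    have h2 : r.val / k = x.val % m := by rw [hr, idx_div hdm]
    show x.val = (r.val % k) * m + r.val / k
    rw [h1, h2, Nat.div_add_mod' x.val m]

lemma mul_Lmat_apply {n k m : ℕ} (hk : 0 < k) (hm : 0 < m) (hn : k * m = n)
    (M : Matrix (Fin n) (Fin n) ℂ) (r c : Fin n) :
    (M * Lmat n k m) r c =
      M r ⟨(c.val % m) * k + c.val / m,
        lt_of_lt_of_eq (idx_lt (Nat.mod_lt _ hm)
          (Nat.div_lt_of_lt_mul (lt_of_lt_of_eq c.isLt (hn.symm.trans (mul_comm k m)))))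
          ((mul_comm m k).trans hn)⟩ := by
  subst hn
  rw [Matrix.mul_apply]
  set y0 : Fin (k * m) := ⟨(c.val % m) * k + c.val / m, _⟩
  rw [sum_pick _ y0 ?side]
  · show M r y0 * (if y0.val = (c.val % m) * k + c.val / m then (1:ℂ) else 0) = M r y0
    rw [if_pos rfl, mul_one]
  case side =>
    intro x hx
    show M r x * (if x.val = (c.val % m) * k + c.val / m then (1:ℂ) else 0) = 0
    rw [if_neg fun h => hx (Fin.ext h), mul_zero]

lemma L_mul_L {n k m : ℕ} (hk : 0 < k) (hm : 0 < m) (hn : k * m = n) :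
    Lmat n k m * Lmat n m k = 1 := by
  ext r c
  rw [mul_Lmat_apply hm hk ((mul_comm m k).trans hn)]
  show (if r.val = _ then (1:ℂ) else 0) = _
  have hck : c.val / k < m := Nat.div_lt_of_lt_mul (lt_of_lt_of_eq c.isLt hn.symm)
  rw [idx_mod hck, idx_div hck, Matrix.one_apply]
  rw [Nat.div_add_mod' c.val k]
  simp [Fin.ext_iff]

lemma mul_Wmat_apply {n m : ℕ} (M : Matrix (Fin n) (Fin n) ℂ) (r c : Fin n) :
    (M * Wmat n m) r c = M r c * tw n ^ ((c.val / m) * (c.val % m)) := by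
  rw [Matrix.mul_apply]
  rw [sum_pick _ c ?side]
  · show M r c * (if c = c then tw n ^ _ else 0) = _
    rw [if_pos rfl]
  case side =>
    intro x hx
    show M r x * (if x = c then tw n ^ _ else 0) = 0
    rw [if_neg hx, mul_zero]

end Perm
section Key

/-- Transposed Cooley–Tukey step: `F_{km} = L^{km}_{km/m →} (I_k ⊗ F_m) W^{km}_m (F_k ⊗ I_m)`. -/
lemma key_ct {k m : ℕ} (hk : 0 < k) (hm : 0 < m) :
    DFT (k * m) = Lmat (k * m) k m * kron (k * m) k m 1 (DFT m) * Wmat (k * m) m *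
      kron (k * m) k m (DFT k) 1 := by
  have hkm : 0 < k * m := Nat.mul_pos hk hm
  ext r c
  have hrk : r.val / k < m := Nat.div_lt_of_lt_mul r.isLt
  have hrm : r.val % k < k := Nat.mod_lt _ hk
  have hcm : c.val % m < m := Nat.mod_lt _ hm
  have hcd : c.val / m < k := Nat.div_lt_of_lt_mul (lt_of_lt_of_eq c.isLt (mul_comm k m))
  set y0 : Fin (k * m) := ⟨(r.val % k) * m + c.val % m, idx_lt hrm hcm⟩ with hy0
  have hyd : y0.val / m = r.val % k := idx_div hcm
  have hym : y0.val % m = c.val % m := idx_mod hcm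
  have hL : ∀ y : Fin (k * m),
      (Lmat (k * m) k m * kron (k * m) k m 1 (DFT m) * Wmat (k * m) m) r y =
      ment (1 : Matrix (Fin k) (Fin k) ℂ) (r.val % k) (y.val / m) * ment (DFT m) (r.val / k) (y.val % m) *
        tw (k * m) ^ ((y.val / m) * (y.val % m)) := by
    intro y
    rw [mul_Wmat_apply, Lmat_mul_apply hk hm rfl]
    congr 2
    · show ment 1 _ (y.val / m) * ment (DFT m) _ (y.val % m) = _
      rw [idx_div hrk, idx_mod hrk]
  rw [Matrix.mul_apply, sum_pick _ y0 ?side]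
  · rw [hL y0, hyd, hym]
    show _ = _ * (ment (DFT k) (y0.val / m) (c.val / m) * ment 1 (y0.val % m) (c.val % m))
    rw [hyd, hym, ment_one, ment_one, if_pos ⟨rfl, hrm⟩, if_pos ⟨rfl, hcm⟩,
      ment_eq _ hrk hcm, ment_eq _ hrm hcd]
    show tw (k * m) ^ (r.val * c.val) =
      1 * tw m ^ (r.val / k * (c.val % m)) * tw (k * m) ^ (r.val % k * (c.val % m)) *
        (tw k ^ (r.val % k * (c.val / m)) * 1)
    rw [one_mul, mul_one]
    have hsplit : r.val * c.val = (k * m) * ((r.val / k) * (c.val / m)) +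
        (k * ((r.val / k) * (c.val % m)) +
          ((r.val % k) * (c.val % m) + m * ((r.val % k) * (c.val / m)))) := by
      conv_lhs => rw [← Nat.div_add_mod r.val k, ← Nat.div_add_mod c.val m]
      ring
    rw [hsplit, pow_add, pow_mul, tw_pow_self hkm, one_pow, one_mul, pow_add, pow_add]
    rw [tw_mul_pow'' hk hm, tw_mul_pow' hk hm]
    ring
  case side =>
    intro y hy
    rw [hL y]
    show _ * (ment (DFT k) (y.val / m) (c.val / m) * ment 1 (y.val % m) (c.val % m)) = 0
    by_cases h1 : y.val / m = r.val % k
    · by_cases h2 : y.val % m = c.val % m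
      · exfalso
        apply hy
        apply Fin.ext
        rw [hy0]
        show y.val = (r.val % k) * m + c.val % m
        rw [← h1, ← h2, Nat.div_add_mod' y.val m]
      · rw [ment_one (k := m), if_neg fun hh => h2 hh.1]
        ring
    · rw [ment_one (k := k), if_neg fun hh => h1 (by omega)]
      ring

/-- `L^{km}_k (I_k ⊗ X) = (X ⊗ I_k) L^{km}_k` for `X` of size `m`. -/
lemma L_swap {k m : ℕ} (hk : 0 < k) (hm : 0 < m) (X : Matrix (Fin m) (Fin m) ℂ) :
    Lmat (k * m) k m * kron (k * m) k m 1 X = kron (k * m) m k X 1 * Lmat (k * m) k m := by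
  ext r c
  rw [Lmat_mul_apply hk hm rfl, mul_Lmat_apply hk hm rfl]
  have hrk : r.val / k < m := Nat.div_lt_of_lt_mul r.isLt
  have hcm : c.val / m < k := Nat.div_lt_of_lt_mul (lt_of_lt_of_eq c.isLt (mul_comm k m))
  show ment 1 _ (c.val / m) * ment X _ (c.val % m) = ment X (r.val / k) _ * ment 1 (r.val % k) _
  rw [idx_div hrk, idx_mod hrk, idx_div hcm, idx_mod hcm]
  ring

end Key
section Mrev

lemma mdig_length (l : List ℕ) (x : ℕ) : (mdig l x).length = l.length := by
  induction l generalizing x with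
  | nil => rfl
  | cons c cs ih => simp [mdig, ih]

lemma mval_append_single (a : List ℕ) (n d : ℕ) :
    ∀ ds : List ℕ, ds.length = a.length →
      mval (a ++ [n]) (ds ++ [d]) = mval a ds + a.prod * d := by
  induction a with
  | nil =>
    intro ds hds
    rw [List.length_eq_zero_iff.mp hds]
    show mval [n] [d] = mval [] [] + 1 * d
    show d + n * mval [] [] = mval [] [] + 1 * d
    show d + n * 0 = 0 + 1 * d
    ring
  | cons c cs ih =>
    intro ds hds
    match ds with
    | d0 :: ds0 =>
      have h0 : ds0.length = cs.length := by simpa using hds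
      show d0 + c * mval (cs ++ [n]) (ds0 ++ [d]) = (d0 + c * mval cs ds0) + (c * cs.prod) * d
      rw [ih ds0 h0]
      ring

lemma mrev_append (a : List ℕ) (n x : ℕ) :
    mrev (a ++ [n]) x = mrev a (x / n) + a.prod * (x % n) := by
  unfold mrev
  rw [List.reverse_append]
  show mval (a ++ [n]) ((mdig (n :: a.reverse) x).reverse) = _
  show mval (a ++ [n]) ((x % n :: mdig a.reverse (x / n)).reverse) = _
  rw [List.reverse_cons, mval_append_single _ _ _ _ (by rw [List.length_reverse, mdig_length, List.length_reverse])]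

lemma mdig_forall₂ (l : List ℕ) (hl : ∀ c ∈ l, 0 < c) (x : ℕ) :
    List.Forall₂ (· < ·) (mdig l x) l := by
  induction l generalizing x with
  | nil => exact List.Forall₂.nil
  | cons c cs ih =>
    exact List.Forall₂.cons (Nat.mod_lt _ (hl c (by simp)))
      (ih (fun y hy => hl y (by simp [hy])) (x / c))

lemma mval_lt {ds a : List ℕ} (h : List.Forall₂ (· < ·) ds a) : mval a ds < a.prod := by
  induction h with
  | nil => exact Nat.lt_succ_self 0
  | @cons d c ds' a' hdc _ ih =>
    show d + c * mval a' ds' < c * a'.prod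
    have h1 : mval a' ds' + 1 ≤ a'.prod := ih
    calc d + c * mval a' ds' < c + c * mval a' ds' := by omega
      _ = c * (mval a' ds' + 1) := by ring
      _ ≤ c * a'.prod := Nat.mul_le_mul_left c h1

lemma mrev_lt (a : List ℕ) (ha : ∀ c ∈ a, 0 < c) (x : ℕ) : mrev a x < a.prod := by
  apply mval_lt
  have h1 : List.Forall₂ (· < ·) (mdig a.reverse x) a.reverse :=
    mdig_forall₂ _ (fun c hc => ha c (List.mem_reverse.mp hc)) x
  have h2 := List.forall₂_reverse_iff.mpr h1
  rwa [List.reverse_reverse] at h2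

lemma Smat_single (n : ℕ) : Smat n [n] = 1 := by
  ext r c
  show (if r.val = mrev [n] c.val then (1:ℂ) else 0) = _
  have : mrev [n] c.val = c.val := by
    show mval [n] ((mdig [n] c.val).reverse) = c.val
    show mval [n] [c.val % n] = c.val
    show c.val % n + n * mval [] [] = c.val
    show c.val % n + n * 0 = c.val
    rw [Nat.mod_eq_of_lt c.isLt]; ring
  rw [this, Matrix.one_apply]
  simp [Fin.ext_iff]

lemma Smat_triv {N n : ℕ} (h : N = n) : Smat N [n] = 1 := by
  subst h; exact Smat_single _

lemma Smat_append {N N' n : ℕ} (a : List ℕ) (ha : ∀ c ∈ a, 0 < c) (hn : 0 < n)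
    (hN' : a.prod = N') (hN : N' * n = N) :
    Smat N (a ++ [n]) = kron N n N' 1 (Smat N' a) * Lmat N N' n := by
  subst hN'; subst hN
  have hN'pos : 0 < a.prod := List.prod_pos ha
  ext r c
  rw [mul_Lmat_apply hN'pos hn rfl]
  have hcn : c.val / n < a.prod := Nat.div_lt_of_lt_mul (lt_of_lt_of_eq c.isLt (mul_comm _ _))
  set y : Fin (a.prod * n) := ⟨(c.val % n) * a.prod + c.val / n, _⟩ with hy
  have hyd : y.val / a.prod = c.val % n := idx_div hcn
  have hym : y.val % a.prod = c.val / n := idx_mod hcn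
  show (if r.val = mrev (a ++ [n]) c.val then (1:ℂ) else 0) =
    ment 1 (r.val / a.prod) (y.val / a.prod) * ment (Smat a.prod a) (r.val % a.prod) (y.val % a.prod)
  rw [hyd, hym, mrev_append, ment_one,
    ment_eq _ (Nat.mod_lt _ hN'pos) hcn]
  show _ = _ * (if (r.val % a.prod : ℕ) = mrev a (c.val / n) then (1:ℂ) else 0)
  have hml : mrev a (c.val / n) < a.prod := mrev_lt a ha _
  have hrd : r.val / a.prod < n := Nat.div_lt_of_lt_mul r.isLt
  by_cases h : r.val = mrev a (c.val / n) + a.prod * (c.val % n)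
  · have h1 : r.val = (c.val % n) * a.prod + mrev a (c.val / n) := by
      rw [h, Nat.add_comm, Nat.mul_comm a.prod (c.val % n)]
    have hd : r.val / a.prod = c.val % n := by rw [h1, idx_div hml]
    have hm : r.val % a.prod = mrev a (c.val / n) := by rw [h1, idx_mod hml]
    rw [if_pos h, if_pos ⟨hd, hrd⟩, if_pos hm, one_mul]
  · rw [if_neg h]
    by_cases hd : r.val / a.prod = c.val % n
    · by_cases hm : r.val % a.prod = mrev a (c.val / n)
      · exfalso
        apply h
        rw [← hd, ← hm, Nat.add_comm]
        exact (Nat.div_add_mod r.val a.prod).symm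
      · rw [if_neg hm, mul_zero]
    · rw [if_neg fun hh => hd hh.1, zero_mul]

end Mrev
section Wrappers

lemma kron_mulN {n p q : ℕ} (hq : 0 < q) (hn : p * q = n)
    (A A' : Matrix (Fin p) (Fin p) ℂ) (B B' : Matrix (Fin q) (Fin q) ℂ) :
    kron n p q A B * kron n p q A' B' = kron n p q (A * A') (B * B') := by
  subst hn; exact kron_mul_general hq A A' B B'

lemma kron_oneN {n p q : ℕ} (hq : 0 < q) (hn : p * q = n) :
    kron n p q (1 : Matrix (Fin p) (Fin p) ℂ) (1 : Matrix (Fin q) (Fin q) ℂ) = 1 := by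
  subst hn; exact kron_one_one hq

lemma kron_id_assocN {n m s p q : ℕ} (hs : 0 < s) (hp : 0 < p) (hq : 0 < q)
    (hm : p * q = m) (hn : s * m = n) (B : Matrix (Fin q) (Fin q) ℂ) :
    kron n (s * p) q 1 B = kron n s m 1 (kron m p q 1 B) := by
  subst hm; subst hn; exact kron_id_assoc hs hp hq B

lemma key_ctN {n k m : ℕ} (hk : 0 < k) (hm : 0 < m) (hn : k * m = n) :
    DFT n = Lmat n k m * kron n k m 1 (DFT m) * Wmat n m * kron n k m (DFT k) 1 := by
  subst hn; exact key_ct hk hm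

lemma L_swapN {n k m : ℕ} (hk : 0 < k) (hm : 0 < m) (hn : k * m = n)
    (X : Matrix (Fin m) (Fin m) ℂ) :
    Lmat n k m * kron n k m 1 X = kron n m k X 1 * Lmat n k m := by
  subst hn; exact L_swap hk hm X

lemma kron_one_congr {N q P P' : ℕ} (h : P = P') (B : Matrix (Fin q) (Fin q) ℂ) :
    kron N P q 1 B = kron N P' q 1 B := by subst h; rfl

lemma kron_one_left' {N p : ℕ} (hp : 0 < p) (B : Matrix (Fin N) (Fin N) ℂ) :
    kron N p N 1 B = B := by
  ext r c
  show ment 1 (r.val / N) (c.val / N) * ment B (r.val % N) (c.val % N) = B r c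
  rw [Nat.div_eq_of_lt r.isLt, Nat.div_eq_of_lt c.isLt, Nat.mod_eq_of_lt r.isLt,
    Nat.mod_eq_of_lt c.isLt, ment_one, ment_eq B r.isLt c.isLt]
  simp [hp]

lemma kron_one_left_dft {N n : ℕ} (h : n = N) : kron N 1 n 1 (DFT n) = DFT N := by
  subst h; exact kron_one_left _

lemma Lmat_triv {N n : ℕ} (h : N = n) : Lmat N n 1 = 1 := by
  subst h
  ext r c
  show (if r.val = (c.val % 1) * N + c.val / 1 then (1:ℂ) else 0) = _
  rw [Nat.mod_one, Nat.div_one, zero_mul, zero_add, Matrix.one_apply]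
  simp [Fin.ext_iff]

lemma Wmat_triv {N n : ℕ} (h : N = n) : Wmat N n = 1 := by
  subst h
  ext r c
  show (if r = c then tw N ^ ((c.val / N) * (c.val % N)) else 0) = _
  rw [Nat.div_eq_of_lt c.isLt, zero_mul, pow_zero, Matrix.one_apply]

lemma prod_kron {n p q : ℕ} (hq : 0 < q) (hn : p * q = n)
    (l : List (Matrix (Fin q) (Fin q) ℂ)) :
    (l.map (fun X => kron n p q 1 X)).prod = kron n p q 1 l.prod := by
  induction l with
  | nil => simpa using (kron_oneN hq hn).symm
  | cons X xs ih =>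
    rw [List.map_cons, List.prod_cons, List.prod_cons, ih, kron_mulN hq hn, one_mul]

end Wrappers
section Dfac

/-- The `k`-th DIT factor `D_{k,α}`. -/
noncomputable def Dfac (N : ℕ) (a : List ℕ) (k : ℕ) : Matrix (Fin N) (Fin N) ℂ :=
  let nk := a.getD k 1
  let Nk := (a.take (k + 1)).prod
  let A := kron N (N / Nk) Nk 1 (Lmat Nk nk (Nk / nk))
  let W := kron N (N / Nk) Nk 1 (Wmat Nk nk)
  A⁻¹ * kron N (N / nk) nk 1 (DFT nk) * W * A

lemma Dfac_congr {N : ℕ} {a : List ℕ} {k nk Nk : ℕ} (h1 : a.getD k 1 = nk)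
    (h2 : (a.take (k + 1)).prod = Nk) :
    Dfac N a k =
      (kron N (N / Nk) Nk 1 (Lmat Nk nk (Nk / nk)))⁻¹ *
        kron N (N / nk) nk 1 (DFT nk) *
        kron N (N / Nk) Nk 1 (Wmat Nk nk) *
        kron N (N / Nk) Nk 1 (Lmat Nk nk (Nk / nk)) := by
  subst h1; subst h2; rfl

lemma assemble {M : Type*} [Monoid M] (L1 K W L2 P S F1 F2 D : M)
    (h1 : P * S = F1) (h2 : L2 * F1 = F2 * L2) (h3 : L2 * L1 = 1)
    (h4 : D = L1 * K * W * F2) :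
    D = (L1 * K * W * L2) * P * (S * L1) := by
  calc D = L1 * K * W * F2 := h4
    _ = L1 * K * W * (F2 * (L2 * L1)) := by rw [h3, mul_one]
    _ = L1 * K * W * ((F2 * L2) * L1) := by simp only [mul_assoc]
    _ = L1 * K * W * ((L2 * F1) * L1) := by rw [h2]
    _ = (L1 * K * W * L2) * P * (S * L1) := by rw [← h1]; simp only [mul_assoc]

lemma Dfac_lift {l : List ℕ} {n Nbig : ℕ} (hal : ∀ x ∈ l, 0 < x) (hn : 0 < n)
    (hbig : l.prod * n = Nbig) (k : ℕ) (hk : k < l.length) :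
    Dfac Nbig (l ++ [n]) k = kron Nbig n l.prod 1 (Dfac l.prod l k) := by
  have hN' : 0 < l.prod := List.prod_pos hal
  set nk := l.getD k 1 with hnkdef
  set Nk := (l.take (k + 1)).prod with hNkdef
  have h1 : (l ++ [n]).getD k 1 = nk := List.getD_append _ _ _ _ hk
  have h2 : ((l ++ [n]).take (k + 1)).prod = Nk := by
    rw [List.take_append_of_le_length (by omega)]
  have hnkpos : 0 < nk := by
    rw [hnkdef, List.getD_eq_getElem l 1 hk]
    exact hal _ (List.getElem_mem hk)
  have hNkpos : 0 < Nk := List.prod_pos fun x hx => hal x (List.mem_of_mem_take hx)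
  have hNksplit : (l.take k).prod * nk = Nk := by
    rw [hNkdef, List.take_succ]
    simp [hk, List.getD_eq_getElem l 1 hk]
    exact Or.inl (List.getD_eq_getElem l 1 hk)
  have hnkNk : nk ∣ Nk := ⟨(l.take k).prod, by rw [← hNksplit, mul_comm]⟩
  have hNkN' : Nk ∣ l.prod := by
    conv_rhs => rw [← List.take_append_drop (k + 1) l]
    rw [List.prod_append]
    exact Dvd.intro _ rfl
  have hnkN' : nk ∣ l.prod := hnkNk.trans hNkN'
  -- the two splitting identities for divisors d of l.prod
  have keyA : ∀ (d : ℕ), 0 < d → d ∣ l.prod → ∀ (X : Matrix (Fin d) (Fin d) ℂ),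
      kron Nbig (Nbig / d) d 1 X =
        kron Nbig n l.prod 1 (kron l.prod (l.prod / d) d 1 X) := by
    intro d hd hdvd X
    obtain ⟨t, ht⟩ := hdvd
    have htd : l.prod / d = t := by rw [ht, mul_comm, Nat.mul_div_cancel _ hd]
    have hbd : Nbig / d = n * t := by
      rw [← hbig, ht]
      rw [mul_comm d t, mul_assoc, mul_comm d n, ← mul_assoc, Nat.mul_div_cancel _ hd]
      ring
    have ht0 : 0 < t := by
      rcases Nat.eq_zero_or_pos t with h0 | h0
      · exfalso; rw [h0, mul_zero] at ht; omega
      · exact h0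
    rw [kron_one_congr hbd X, kron_one_congr htd X]
    exact kron_id_assocN hn ht0 hd (by rw [mul_comm]; exact ht.symm)
      (by rw [mul_comm]; exact hbig) X
  rw [Dfac_congr h1 h2, Dfac_congr hnkdef.symm hNkdef.symm]
  set Lk := Lmat Nk nk (Nk / nk) with hLk
  set Lk' := Lmat Nk (Nk / nk) nk with hLk'
  have hLL : Lk * Lk' = 1 := L_mul_L hnkpos
    (Nat.div_pos (Nat.le_of_dvd hNkpos hnkNk) hnkpos) (Nat.mul_div_cancel' hnkNk)
  have hLL' : Lk' * Lk = 1 := L_mul_L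
    (Nat.div_pos (Nat.le_of_dvd hNkpos hnkNk) hnkpos) hnkpos (Nat.div_mul_cancel hnkNk)
  have hNdN : (l.prod / Nk) * Nk = l.prod := Nat.div_mul_cancel hNkN'
  have hNdpos : 0 < l.prod / Nk := Nat.div_pos (Nat.le_of_dvd hN' hNkN') hNkpos
  set Asm := kron l.prod (l.prod / Nk) Nk 1 Lk with hAsm
  set Bsm := kron l.prod (l.prod / Nk) Nk 1 Lk' with hBsm
  have hAB : Asm * Bsm = 1 := by
    rw [hAsm, hBsm, kron_mulN hNkpos hNdN, one_mul, hLL, kron_oneN hNkpos hNdN]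
  have hBA : Bsm * Asm = 1 := by
    rw [hAsm, hBsm, kron_mulN hNkpos hNdN, one_mul, hLL', kron_oneN hNkpos hNdN]
  have hAinv : Asm⁻¹ = Bsm := Matrix.inv_eq_right_inv hAB
  have hbig2 : n * l.prod = Nbig := by rw [mul_comm]; exact hbig
  have hAbig : kron Nbig (Nbig / Nk) Nk 1 Lk = kron Nbig n l.prod 1 Asm :=
    keyA Nk hNkpos hNkN' Lk
  have hAbiginv : (kron Nbig (Nbig / Nk) Nk 1 Lk)⁻¹ = kron Nbig n l.prod 1 Bsm := by
    apply Matrix.inv_eq_right_inv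
    rw [hAbig, kron_mulN hN' hbig2, one_mul, hAB, kron_oneN hN' hbig2]
  rw [hAbiginv, hAbig, keyA nk hnkpos hnkN' (DFT nk), keyA Nk hNkpos hNkN' (Wmat Nk nk),
    kron_mulN hN' hbig2, kron_mulN hN' hbig2, kron_mulN hN' hbig2, hAinv]
  simp only [one_mul]

end Dfac
theorem fft_main (a : List ℕ) (ha : ∀ x ∈ a, 0 < x) (hne : a ≠ []) :
    DFT a.prod =
      ((List.range a.length).reverse.map (Dfac a.prod a)).prod * Smat a.prod a := by
  induction a using List.reverseRecOn with
  | nil => exact absurd rfl hne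
  | append_singleton l n ih =>
    have hn : 0 < n := ha n (by simp)
    by_cases hl : l = []
    · subst hl
      simp only [List.nil_append] at ha hne ⊢
      change DFT ([n] : List ℕ).prod = ((List.range ([n] : List ℕ).length).reverse.map (Dfac ([n] : List ℕ).prod [n])).prod * Smat ([n] : List ℕ).prod [n]
      generalize hN : ([n] : List ℕ).prod = N
      have hNn : N = n := by rw [← hN]; simp
      have hNpos : 0 < N := by rw [hNn]; exact hn
      rw [show (List.range ([n] : List ℕ).length).reverse.map (Dfac N [n]) = [Dfac N [n] 0]
        from rfl, List.prod_singleton]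
      rw [Dfac_congr (a := [n]) (k := 0) (nk := n) (Nk := N) (by rfl) hN]
      have hdivNN : N / N = 1 := Nat.div_self hNpos
      have hdivNn : N / n = 1 := by rw [hNn, Nat.div_self hn]
      rw [kron_one_congr hdivNN, kron_one_congr hdivNN, kron_one_congr hdivNn,
        kron_one_left' one_pos, kron_one_left' one_pos, kron_one_left_dft hNn.symm,
        hdivNn, Lmat_triv hNn, Wmat_triv hNn, Smat_triv hNn]
      rw [show (1 : Matrix (Fin N) (Fin N) ℂ)⁻¹ = 1 from Matrix.inv_eq_right_inv (one_mul 1)]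
      rw [one_mul, mul_one, mul_one, mul_one]
    · have hal : ∀ x ∈ l, 0 < x := fun x hx => ha x (by simp [hx])
      have IH := ih hal hl
      have hN' : 0 < l.prod := List.prod_pos hal
      have hNfact : l.prod * n = (l ++ [n]).prod := by simp
      have hn2 : n * l.prod = (l ++ [n]).prod := by rw [mul_comm]; exact hNfact
      have hNpos : 0 < (l ++ [n]).prod := by rw [← hNfact]; exact Nat.mul_pos hN' hn
      -- peel off the last factor
      rw [show (l ++ [n]).length = l.length + 1 from by simp, List.range_succ,
        List.reverse_append, List.reverse_singleton, List.singleton_append,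
        List.map_cons, List.prod_cons]
      -- lift the lower factors
      rw [List.map_congr_left (fun k hk => Dfac_lift hal hn hNfact k
        (List.mem_range.mp (List.mem_reverse.mp hk)))]
      rw [show (fun k => kron ((l ++ [n]).prod) n l.prod 1 (Dfac l.prod l k)) =
        ((fun X => kron ((l ++ [n]).prod) n l.prod 1 X) ∘ (Dfac l.prod l)) from rfl,
        ← List.map_map, prod_kron hN' hn2]
      -- top factor
      rw [Dfac_congr (nk := n) (Nk := (l ++ [n]).prod) (by simp) (by simp)]
      have hNN : (l ++ [n]).prod / (l ++ [n]).prod = 1 := Nat.div_self hNpos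
      have hNdn : (l ++ [n]).prod / n = l.prod := by rw [← hNfact, Nat.mul_div_cancel _ hn]
      rw [kron_one_congr hNN, kron_one_congr hNN, kron_one_congr hNdn,
        kron_one_left' one_pos, kron_one_left' one_pos, hNdn]
      rw [show (Lmat ((l ++ [n]).prod) n l.prod)⁻¹ = Lmat ((l ++ [n]).prod) l.prod n
        from Matrix.inv_eq_right_inv (L_mul_L hn hN' hn2)]
      -- digit-reversal permutation
      rw [Smat_append l hal hn rfl hNfact]
      exact assemble _ _ _ _ _ _ _ _ _
        (by rw [kron_mulN hN' hn2, one_mul, ← IH])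
        (L_swapN hn hN' hn2 (DFT l.prod))
        (L_mul_L hn hN' hn2)
        (key_ctN hN' hn hNfact)

/-- iterated DIT FFT factorization. For `α = (n_K,…,n_0)`
(least-significant-first radix list `a = [n_0,…,n_K]`) and `N = ∏ n_k`,
`F_N = (∏_{k=0}^K D_{k,α}) S_α` with `D_{K,α}` leftmost, where
`D_{k,α} = A_k⁻¹ (I_{N/n_k} ⊗ F_{n_k}) Ŵ_k A_k`,
`A_k = I_{N/N_k} ⊗ L^{N_k}_{n_k}`, `Ŵ_k = I_{N/N_k} ⊗ W^{N_k}_{n_k}`,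
`N_k = ∏_{j=0}^k n_j`. -/
theorem fft_dit (a : List ℕ) (hne : a ≠ []) (ha : ∀ x ∈ a, 0 < x)
    (N : ℕ) (hN : N = a.prod) :
    DFT N =
      (((List.range a.length).reverse.map (fun k =>
        let nk := a.getD k 1
        let Nk := (a.take (k + 1)).prod
        let A := kron N (N / Nk) Nk 1 (Lmat Nk nk (Nk / nk))
        let W := kron N (N / Nk) Nk 1 (Wmat Nk nk)
        A⁻¹ * kron N (N / nk) nk 1 (DFT nk) * W * A)).prod) *
      Smat N a := by
  subst hN
  exact fft_main a ha hne
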